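/- arXiv:1111.3181 — 5 statements merged into one kernel-verified Lean document; each statement's English description precedes it below -/
import Mathlib

section
/- Let ι be a finite set and v : ι → ℝ. Then the following identity holds in ℚ: 1_{∀k∈ι, v(k) > 0} = Σ_{I ⊆ ι} Σ_{ε : I → {−1,1}} 2^{−(|ι| + |I|)} · (∏_{j∈I} ε(j)) · (∏_{j∈I} #{y ∈ ℝ : y² = ε(j)·v(j)}) · (∏_{k∈ι∖I} 1_{v(k) ≠ 0}), where the outer sum ranges over all subsets I of ι and the inner sum over all sign functions ε on I. -/
lemma card_sq (c : ℝ) : (Nat.card {y : ℝ | y ^ 2 = c} : ℚ) =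
    if 0 < c then 2 else if c = 0 then 1 else 0 := by
  rcases lt_trichotomy 0 c with h | h | h
  · rw [if_pos h]
    have hc : (Real.sqrt c) ^ 2 = c := Real.sq_sqrt h.le
    have hset : {y : ℝ | y ^ 2 = c} = {Real.sqrt c, -Real.sqrt c} := by
      ext y
      simp only [Set.mem_setOf_eq, Set.mem_insert_iff, Set.mem_singleton_iff]
      conv_lhs => rw [← hc]
      exact sq_eq_sq_iff_eq_or_eq_neg
    rw [hset, Nat.card_coe_set_eq, Set.ncard_pair]
    · norm_num
    · have : 0 < Real.sqrt c := Real.sqrt_pos.mpr h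
      intro he; nlinarith
  · rw [if_neg (by rw [← h]; exact lt_irrefl 0), if_pos h.symm]
    have hset : {y : ℝ | y ^ 2 = c} = {0} := by
      ext y
      simp [← h, pow_eq_zero_iff]
    rw [hset, Nat.card_coe_set_eq, Set.ncard_singleton]
    norm_num
  · rw [if_neg (by linarith), if_neg (by linarith)]
    have hset : {y : ℝ | y ^ 2 = c} = ∅ := by
      ext y
      simp only [Set.mem_setOf_eq, Set.mem_empty_iff_false, iff_false]
      nlinarith [sq_nonneg y]
    rw [hset]
    simp

lemma key_sum (x : ℝ) :
    (∑ e ∈ ({-1, 1} : Finset ℤ),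
        (1/4 : ℚ) * (e : ℚ) * (Nat.card {y : ℝ | y ^ 2 = (e : ℝ) * x} : ℚ)) +
      (1/2 : ℚ) * (if x ≠ 0 then (1 : ℚ) else 0) = if 0 < x then (1 : ℚ) else 0 := by
  rw [Finset.sum_pair (by norm_num : (-1 : ℤ) ≠ 1)]
  have h1 : ((-1 : ℤ) : ℝ) * x = -x := by push_cast; ring
  have h2 : ((1 : ℤ) : ℝ) * x = x := by push_cast; ring
  rw [h1, h2, card_sq, card_sq]
  rcases lt_trichotomy 0 x with h | h | h
  · rw [if_neg (by linarith), if_neg (by linarith), if_pos h, if_pos (ne_of_gt h),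
      if_pos h]
    norm_num
  · rw [if_neg (by rw [← h]; simp), if_pos (by rw [← h]; ring), if_neg (by linarith),
      if_pos h.symm, if_neg (by simp [← h]), if_neg (by linarith)]
    norm_num
  · rw [if_pos (by linarith), if_neg (by linarith), if_neg (by linarith),
      if_pos (ne_of_lt h), if_neg (by linarith)]
    norm_num

lemma hpow_aux (n i : ℕ) (hi : i ≤ n) :
    (2 : ℚ) ^ (-((n : ℤ) + (i : ℤ))) = (1/4 : ℚ) ^ i * (1/2 : ℚ) ^ (n - i) := by
  have key2 : ((2 : ℚ) ^ (n + i)) * ((1/4 : ℚ) ^ i * (1/2 : ℚ) ^ (n - i)) = 1 := by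
    have hn : n + i = (n - i) + i + i := by omega
    rw [hn, pow_add, pow_add, div_pow, div_pow, one_pow, one_pow,
      show (4 : ℚ) = 2 * 2 by norm_num, mul_pow]
    have h2 : (2 : ℚ) ^ i ≠ 0 := by positivity
    have h3 : (2 : ℚ) ^ (n - i) ≠ 0 := by positivity
    field_simp
  have h4 : (2 : ℚ) ^ (-((n : ℤ) + (i : ℤ))) = ((2 : ℚ) ^ (n + i))⁻¹ := by
    rw [zpow_neg]
    norm_cast
  rw [h4, inv_eq_of_mul_eq_one_right key2]

/-- The fibrewise content of the inclusion-exclusion formula expressing the measure of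
`{v k > 0, k ∈ ι}` in terms of the double covers `{y² = ε_j v_j}`:
`1_{∀k, v k > 0} = Σ_{I ⊆ ι} Σ_{ε : I → {−1,1}} 2^{−(|ι|+|I|)} (∏_{j∈I} ε_j)
(∏_{j∈I} #{y : y² = ε_j v_j}) (∏_{k∉I} 1_{v k ≠ 0})`. -/
theorem stmt2 (ι : Type) [Fintype ι] [DecidableEq ι] (v : ι → ℝ) :
    (if ∀ k, 0 < v k then (1 : ℚ) else 0) =
      ∑ I : Finset ι, ∑ ε : I → ({-1, 1} : Finset ℤ),
        (2 : ℚ) ^ (-((Fintype.card ι : ℤ) + (I.card : ℤ))) *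
          (∏ j : I, ((ε j : ℤ) : ℚ)) *
          (∏ j : I, (Nat.card {y : ℝ | y ^ 2 = ((ε j : ℤ) : ℝ) * v j} : ℚ)) *
          (∏ k ∈ Iᶜ, if v k ≠ 0 then (1 : ℚ) else 0) := by
  classical
  set F : ι → ℤ → ℚ := fun j e =>
    (1/4 : ℚ) * (e : ℚ) * (Nat.card {y : ℝ | y ^ 2 = (e : ℝ) * v j} : ℚ) with hF
  set G : ι → ℚ := fun k => (1/2 : ℚ) * (if v k ≠ 0 then (1 : ℚ) else 0) with hGdef
  set A : ι → ℚ := fun j => ∑ e ∈ ({-1, 1} : Finset ℤ), F j e with hA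
  have step1 : ∀ I : Finset ι, ∀ ε : I → ({-1, 1} : Finset ℤ),
      (2 : ℚ) ^ (-((Fintype.card ι : ℤ) + (I.card : ℤ))) *
          (∏ j : I, ((ε j : ℤ) : ℚ)) *
          (∏ j : I, (Nat.card {y : ℝ | y ^ 2 = ((ε j : ℤ) : ℝ) * v j} : ℚ)) *
          (∏ k ∈ Iᶜ, if v k ≠ 0 then (1 : ℚ) else 0)
        = (∏ j : I, F j (ε j)) * (∏ k ∈ Iᶜ, G k) := by
    intro I ε
    have hprodF : (∏ j : I, F j (ε j))
        = (1/4 : ℚ) ^ I.card * (∏ j : I, ((ε j : ℤ) : ℚ)) *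
          (∏ j : I, (Nat.card {y : ℝ | y ^ 2 = ((ε j : ℤ) : ℝ) * v j} : ℚ)) := by
      simp only [hF]
      rw [Finset.prod_mul_distrib, Finset.prod_mul_distrib, Finset.prod_const]
      simp [Fintype.card_coe]
    have hprodG : (∏ k ∈ Iᶜ, G k)
        = (1/2 : ℚ) ^ (Fintype.card ι - I.card) *
          (∏ k ∈ Iᶜ, if v k ≠ 0 then (1 : ℚ) else 0) := by
      simp only [hGdef]
      rw [Finset.prod_mul_distrib, Finset.prod_const, Finset.card_compl]
    rw [hprodF, hprodG, hpow_aux _ _ (Finset.card_le_univ I)]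
    ring
  have step2 : ∀ I : Finset ι,
      (∑ ε : I → ({-1, 1} : Finset ℤ), (∏ j : I, F j (ε j)) * (∏ k ∈ Iᶜ, G k))
        = (∏ j ∈ I, A j) * (∏ k ∈ Iᶜ, G k) := by
    intro I
    rw [← Finset.sum_mul]
    congr 1
    calc (∑ ε : I → ({-1, 1} : Finset ℤ), ∏ j : I, F (↑j) (↑(ε j)))
        = ∏ j : I, ∑ e : ({-1, 1} : Finset ℤ), F (↑j) (↑e) :=
          (Fintype.prod_sum fun (j : I) (e : ({-1, 1} : Finset ℤ)) => F (↑j) (↑e)).symm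
      _ = ∏ j : I, A ↑j := Finset.prod_congr rfl fun j _ => Finset.sum_coe_sort _ _
      _ = ∏ j ∈ I, A j := Finset.prod_coe_sort I A
  calc (if ∀ k, 0 < v k then (1 : ℚ) else 0)
      = ∏ k, (if 0 < v k then (1 : ℚ) else 0) := by
        by_cases h : ∀ k, 0 < v k
        · simp [h]
        · push_neg at h
          obtain ⟨k, hk⟩ := h
          rw [if_neg (by push_neg; exact ⟨k, hk⟩)]
          exact (Finset.prod_eq_zero (Finset.mem_univ k)
            (if_neg (not_lt.mpr hk) : (if 0 < v k then (1 : ℚ) else 0) = 0)).symm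
    _ = ∏ k, (A k + G k) := Finset.prod_congr rfl fun k _ => (key_sum (v k)).symm
    _ = ∑ I : Finset ι, (∏ j ∈ I, A j) * (∏ k ∈ Iᶜ, G k) := Fintype.prod_add A G
    _ = _ := by
        refine Finset.sum_congr rfl fun I _ => ?_
        rw [← step2 I]
        exact Finset.sum_congr rfl fun ε _ => (step1 I ε).symm
end

section
/- Let I be a nonempty finite set, let N : I → ℕ take positive values, let m = gcd_{i∈I} N_i, and let n : I → ℤ satisfy Σ_{i∈I} n_i N_i = m. Let Z be any set, u : Z → ℝ∖{0} a function, and c a nonzero real number. Then the map (z, x', t) ↦ (z, (t^{n_i}·x'_i)_{i∈I}) is a bijection from W' = {(z, x', t) ∈ Z × (ℝ∖{0})^I × (ℝ∖{0}) : u(z)·t^m = c and ∏_{i∈I} (x'_i)^{N_i/m} = 1} onto W = {(z, x) ∈ Z × (ℝ∖{0})^I : u(z)·∏_{i∈I} x_i^{N_i} = c}, with inverse (z, x) ↦ (z, ((∏_{ℓ∈I} x_ℓ^{N_ℓ/m})^{−n_i}·x_i)_{i∈I}, ∏_{ℓ∈I} x_ℓ^{N_ℓ/m}). -/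
private lemma prod_zpow_eq_zpow_sum {ι : Type} (t : ℝ) (ht : t ≠ 0) (s : Finset ι) (f : ι → ℤ) :
    ∏ i ∈ s, t ^ f i = t ^ (∑ i ∈ s, f i) := by
  induction s using Finset.cons_induction with
  | empty => simp
  | cons a s ha ih => rw [Finset.prod_cons, Finset.sum_cons, ih, ← zpow_add₀ ht]

/-- The gcd-normalization change of variables: with `m = gcd_{i∈I} N_i` and
`Σ n_i N_i = m`, the map `(z, x', t) ↦ (z, (t^{n_i} x'_i)_i)` is a bijection from
`W' = {u(z) t^m = c, ∏ (x'_i)^{N_i/m} = 1}` onto `W = {u(z) ∏ x_i^{N_i} = c}`, with the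
indicated inverse `(z, x) ↦ (z, ((∏ x_ℓ^{N_ℓ/m})^{-n_i} x_i)_i, ∏ x_ℓ^{N_ℓ/m})`. -/
theorem stmt7 (ι : Type) [Fintype ι] [Nonempty ι]
    (N : ι → ℕ) (hN : ∀ i, 0 < N i)
    (m : ℕ) (hm : m = Finset.univ.gcd N)
    (nn : ι → ℤ) (hnn : ∑ i, nn i * (N i : ℤ) = (m : ℤ))
    (Z : Type) (u : Z → ℝ) (hu : ∀ z, u z ≠ 0) (c : ℝ) (hc : c ≠ 0) :
    Set.BijOn
      (fun p : Z × (ι → ℝ) × ℝ => (p.1, fun i => p.2.2 ^ (nn i) * p.2.1 i))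
      {p : Z × (ι → ℝ) × ℝ | u p.1 * p.2.2 ^ m = c ∧ (∀ i, p.2.1 i ≠ 0) ∧
        p.2.2 ≠ 0 ∧ ∏ i, (p.2.1 i) ^ (N i / m) = 1}
      {p : Z × (ι → ℝ) | (∀ i, p.2 i ≠ 0) ∧ u p.1 * ∏ i, (p.2 i) ^ (N i) = c} ∧
    Set.InvOn
      (fun q : Z × (ι → ℝ) =>
        (q.1, fun i => (∏ l, (q.2 l) ^ (N l / m)) ^ (-(nn i)) * q.2 i,
          ∏ l, (q.2 l) ^ (N l / m)))
      (fun p : Z × (ι → ℝ) × ℝ => (p.1, fun i => p.2.2 ^ (nn i) * p.2.1 i))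
      {p : Z × (ι → ℝ) × ℝ | u p.1 * p.2.2 ^ m = c ∧ (∀ i, p.2.1 i ≠ 0) ∧
        p.2.2 ≠ 0 ∧ ∏ i, (p.2.1 i) ^ (N i / m) = 1}
      {p : Z × (ι → ℝ) | (∀ i, p.2 i ≠ 0) ∧ u p.1 * ∏ i, (p.2 i) ^ (N i) = c} := by
  classical
  have hmd : ∀ i, m ∣ N i := fun i => hm ▸ Finset.gcd_dvd (Finset.mem_univ i)
  have hm0 : m ≠ 0 := by
    intro h
    obtain ⟨i⟩ := ‹Nonempty ι›
    have := hmd i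
    rw [h, zero_dvd_iff] at this
    exact (hN i).ne' this
  have hNdm : ∀ i, (N i / m) * m = N i := fun i => Nat.div_mul_cancel (hmd i)
  -- Σ n_i (N_i / m) = 1
  have hsum1 : ∑ i, nn i * ((N i / m : ℕ) : ℤ) = 1 := by
    have h : (∑ i, nn i * ((N i / m : ℕ) : ℤ)) * (m : ℤ) = 1 * (m : ℤ) := by
      rw [Finset.sum_mul, one_mul]
      calc ∑ i, nn i * ((N i / m : ℕ) : ℤ) * (m : ℤ)
          = ∑ i, nn i * (N i : ℤ) := Finset.sum_congr rfl fun i _ => by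
            rw [mul_assoc, ← Nat.cast_mul, hNdm i]
        _ = (m : ℤ) := hnn
    exact mul_right_cancel₀ (by exact_mod_cast hm0) h
  -- key product expansion
  have key : ∀ (t : ℝ), t ≠ 0 → ∀ (a : ι → ℤ) (y : ι → ℝ) (k : ι → ℕ),
      ∏ i, (t ^ a i * y i) ^ k i = t ^ (∑ i, a i * (k i : ℤ)) * ∏ i, y i ^ k i := by
    intro t ht a y k
    rw [← prod_zpow_eq_zpow_sum t ht, ← Finset.prod_mul_distrib]
    refine Finset.prod_congr rfl fun i _ => ?_
    rw [mul_pow, ← zpow_natCast (t ^ a i), ← zpow_mul]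
  have hprod : ∀ (x : ι → ℝ), ∏ i, (x i) ^ (N i) = (∏ i, (x i) ^ (N i / m)) ^ m := by
    intro x
    rw [← Finset.prod_pow]
    exact Finset.prod_congr rfl fun i _ => by rw [← pow_mul, hNdm i]
  -- MapsTo forward
  have hmf : Set.MapsTo
      (fun p : Z × (ι → ℝ) × ℝ => (p.1, fun i => p.2.2 ^ (nn i) * p.2.1 i))
      {p : Z × (ι → ℝ) × ℝ | u p.1 * p.2.2 ^ m = c ∧ (∀ i, p.2.1 i ≠ 0) ∧
        p.2.2 ≠ 0 ∧ ∏ i, (p.2.1 i) ^ (N i / m) = 1}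
      {p : Z × (ι → ℝ) | (∀ i, p.2 i ≠ 0) ∧ u p.1 * ∏ i, (p.2 i) ^ (N i) = c} := by
    rintro ⟨z, x', t⟩ ⟨h1, h2, h3, h4⟩
    refine ⟨fun i => mul_ne_zero (zpow_ne_zero _ h3) (h2 i), ?_⟩
    have : ∏ i, (t ^ nn i * x' i) ^ N i = t ^ m := by
      rw [key t h3 nn x' N, hnn, hprod x', h4, one_pow, mul_one, zpow_natCast]
    simpa [this] using h1
  -- MapsTo backward
  have hmg : Set.MapsTo
      (fun q : Z × (ι → ℝ) =>
        (q.1, fun i => (∏ l, (q.2 l) ^ (N l / m)) ^ (-(nn i)) * q.2 i,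
          ∏ l, (q.2 l) ^ (N l / m)))
      {p : Z × (ι → ℝ) | (∀ i, p.2 i ≠ 0) ∧ u p.1 * ∏ i, (p.2 i) ^ (N i) = c}
      {p : Z × (ι → ℝ) × ℝ | u p.1 * p.2.2 ^ m = c ∧ (∀ i, p.2.1 i ≠ 0) ∧
        p.2.2 ≠ 0 ∧ ∏ i, (p.2.1 i) ^ (N i / m) = 1} := by
    rintro ⟨z, x⟩ ⟨hx, hq⟩
    set s : ℝ := ∏ l, (x l) ^ (N l / m) with hs
    have hs0 : s ≠ 0 := Finset.prod_ne_zero_iff.2 fun i _ => pow_ne_zero _ (hx i)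
    refine ⟨?_, fun i => mul_ne_zero (zpow_ne_zero _ hs0) (hx i), hs0, ?_⟩
    · rw [← hprod x]; exact hq
    · rw [key s hs0 (fun i => -(nn i)) x (fun i => N i / m)]
      have : ∑ i, -(nn i) * ((N i / m : ℕ) : ℤ) = -1 := by
        simp only [neg_mul, Finset.sum_neg_distrib, hsum1]
      rw [this, ← hs, zpow_neg_one, inv_mul_cancel₀ hs0]
  -- InvOn
  have hinv : Set.InvOn
      (fun q : Z × (ι → ℝ) =>
        (q.1, fun i => (∏ l, (q.2 l) ^ (N l / m)) ^ (-(nn i)) * q.2 i,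
          ∏ l, (q.2 l) ^ (N l / m)))
      (fun p : Z × (ι → ℝ) × ℝ => (p.1, fun i => p.2.2 ^ (nn i) * p.2.1 i))
      {p : Z × (ι → ℝ) × ℝ | u p.1 * p.2.2 ^ m = c ∧ (∀ i, p.2.1 i ≠ 0) ∧
        p.2.2 ≠ 0 ∧ ∏ i, (p.2.1 i) ^ (N i / m) = 1}
      {p : Z × (ι → ℝ) | (∀ i, p.2 i ≠ 0) ∧ u p.1 * ∏ i, (p.2 i) ^ (N i) = c} := by
    constructor
    · rintro ⟨z, x', t⟩ ⟨h1, h2, h3, h4⟩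
      have hst : ∏ l, (t ^ nn l * x' l) ^ (N l / m) = t := by
        rw [key t h3 nn x' (fun l => N l / m), hsum1, h4, mul_one, zpow_one]
      simp only [Prod.mk.injEq, hst]
      refine ⟨trivial, funext fun i => ?_, trivial⟩
      rw [← mul_assoc, ← zpow_add₀ h3, neg_add_cancel, zpow_zero, one_mul]
    · rintro ⟨z, x⟩ ⟨hx, hq⟩
      set s : ℝ := ∏ l, (x l) ^ (N l / m) with hs
      have hs0 : s ≠ 0 := Finset.prod_ne_zero_iff.2 fun i _ => pow_ne_zero _ (hx i)
      simp only [Prod.mk.injEq]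
      refine ⟨trivial, funext fun i => ?_⟩
      rw [← mul_assoc, ← zpow_add₀ hs0, add_neg_cancel, zpow_zero, one_mul]
  exact ⟨hinv.bijOn hmf hmg, hinv⟩
end

section
/- Let I be a nonempty finite set, let N : I → ℕ take positive values, let m = gcd_{i∈I} N_i, and let n : I → ℤ satisfy Σ_{i∈I} n_i N_i = m. Let Z be any set, u : Z → ℝ∖{0} a function, and η a real number. Then the map (z, x', t, w) ↦ (z, (t^{n_i}·x'_i)_{i∈I}, w) is a bijection from {(z, x', t, w) ∈ Z × (ℝ∖{0})^I × (ℝ∖{0}) × ℝ : w²·u(z)·t^m = η and ∏_{i∈I} (x'_i)^{N_i/m} = 1} onto {(z, x, y) ∈ Z × (ℝ∖{0})^I × ℝ : y²·u(z)·∏_{i∈I} x_i^{N_i} = η}. -/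
private lemma zpow_sum' (t : ℝ) (ht : t ≠ 0) {ι : Type} (s : Finset ι) (g : ι → ℤ) :
    t ^ (∑ i ∈ s, g i) = ∏ i ∈ s, t ^ g i := by
  classical
  induction s using Finset.induction with
  | empty => simp
  | @insert a s h ih => rw [Finset.sum_insert h, Finset.prod_insert h, zpow_add₀ ht, ih]

private lemma key_prod {ι : Type} [Fintype ι] (t : ℝ) (ht : t ≠ 0) (x : ι → ℝ)
    (nn : ι → ℤ) (k : ι → ℕ) :
    ∏ i, (t ^ nn i * x i) ^ k i = t ^ (∑ i, nn i * (k i : ℤ)) * ∏ i, x i ^ k i := by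
  rw [zpow_sum']
  · rw [← Finset.prod_mul_distrib]
    refine Finset.prod_congr rfl fun i _ => ?_
    rw [mul_pow, ← zpow_natCast (t ^ nn i), ← zpow_mul]
  · exact ht

/-- The gcd-normalization change of variables for the double covers: with
`m = gcd_{i∈I} N_i` and `Σ n_i N_i = m`, the map `(z, x', t, w) ↦ (z, (t^{n_i} x'_i)_i, w)`
is a bijection from `{w² u(z) t^m = η, ∏ (x'_i)^{N_i/m} = 1}` onto
`{y² u(z) ∏ x_i^{N_i} = η}`. -/
theorem stmt8 (ι : Type) [Fintype ι] [Nonempty ι]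
    (N : ι → ℕ) (hN : ∀ i, 0 < N i)
    (m : ℕ) (hm : m = Finset.univ.gcd N)
    (nn : ι → ℤ) (hnn : ∑ i, nn i * (N i : ℤ) = (m : ℤ))
    (Z : Type) (u : Z → ℝ) (hu : ∀ z, u z ≠ 0) (η : ℝ) :
    Set.BijOn
      (fun p : Z × (ι → ℝ) × ℝ × ℝ =>
        (p.1, fun i => p.2.2.1 ^ (nn i) * p.2.1 i, p.2.2.2))
      {p : Z × (ι → ℝ) × ℝ × ℝ | p.2.2.2 ^ 2 * u p.1 * p.2.2.1 ^ m = η ∧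
        (∀ i, p.2.1 i ≠ 0) ∧ p.2.2.1 ≠ 0 ∧ ∏ i, (p.2.1 i) ^ (N i / m) = 1}
      {p : Z × (ι → ℝ) × ℝ | p.2.2 ^ 2 * u p.1 * ∏ i, (p.2.1 i) ^ (N i) = η ∧
        ∀ i, p.2.1 i ≠ 0} := by
  have hmdvd : ∀ i : ι, m ∣ N i := fun i => hm ▸ Finset.gcd_dvd (Finset.mem_univ i)
  have hm0 : m ≠ 0 := by
    intro h
    obtain ⟨i⟩ := ‹Nonempty ι›
    have := hmdvd i
    rw [h] at this
    exact (hN i).ne' (Nat.eq_zero_of_zero_dvd this)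
  -- Bézout divided by m : ∑ nn i * (N i / m) = 1
  have hdiv : ∑ i, nn i * ((N i / m : ℕ) : ℤ) = 1 := by
    have hmZ : (m : ℤ) ≠ 0 := Int.natCast_ne_zero.mpr hm0
    have h2 : ∑ i, nn i * (N i : ℤ) = (m : ℤ) * ∑ i, nn i * ((N i / m : ℕ) : ℤ) := by
      rw [Finset.mul_sum]
      refine Finset.sum_congr rfl fun i _ => ?_
      have : ((N i : ℤ)) = (m : ℤ) * ((N i / m : ℕ) : ℤ) := by
        rw [← Nat.cast_mul, Nat.mul_div_cancel' (hmdvd i)]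
      rw [this]; ring
    exact mul_left_cancel₀ hmZ (by rw [← h2, hnn, mul_one])
  -- pow rewriting: x ^ N i = (x ^ (N i / m)) ^ m
  have hpowN : ∀ (x : ℝ) (i : ι), x ^ N i = (x ^ (N i / m)) ^ m := fun x i => by
    rw [← pow_mul, Nat.div_mul_cancel (hmdvd i)]
  -- the inverse map
  set g : Z × (ι → ℝ) × ℝ → Z × (ι → ℝ) × ℝ × ℝ := fun q =>
    (q.1, fun i => (∏ j, (q.2.1 j) ^ (N j / m)) ^ (-(nn i)) * q.2.1 i,
      ∏ j, (q.2.1 j) ^ (N j / m), q.2.2) with hg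
  have hmapsTo : Set.MapsTo
      (fun p : Z × (ι → ℝ) × ℝ × ℝ =>
        (p.1, fun i => p.2.2.1 ^ (nn i) * p.2.1 i, p.2.2.2))
      {p : Z × (ι → ℝ) × ℝ × ℝ | p.2.2.2 ^ 2 * u p.1 * p.2.2.1 ^ m = η ∧
        (∀ i, p.2.1 i ≠ 0) ∧ p.2.2.1 ≠ 0 ∧ ∏ i, (p.2.1 i) ^ (N i / m) = 1}
      {p : Z × (ι → ℝ) × ℝ | p.2.2 ^ 2 * u p.1 * ∏ i, (p.2.1 i) ^ (N i) = η ∧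
        ∀ i, p.2.1 i ≠ 0} := by
    rintro ⟨z, x, t, w⟩ ⟨h1, h2, h3, h4⟩
    constructor
    · show w ^ 2 * u z * ∏ i, (t ^ nn i * x i) ^ N i = η
      rw [key_prod t h3 x nn N, hnn]
      have : ∏ i, x i ^ N i = 1 := by
        calc ∏ i, x i ^ N i = ∏ i, (x i ^ (N i / m)) ^ m :=
              Finset.prod_congr rfl fun i _ => hpowN (x i) i
          _ = (∏ i, x i ^ (N i / m)) ^ m := Finset.prod_pow _ _ _
          _ = 1 := by rw [h4, one_pow]
      rw [this, mul_one, zpow_natCast]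
      exact h1
    · intro i
      exact mul_ne_zero (zpow_ne_zero _ h3) (h2 i)
  have hmapsTo' : Set.MapsTo g
      {p : Z × (ι → ℝ) × ℝ | p.2.2 ^ 2 * u p.1 * ∏ i, (p.2.1 i) ^ (N i) = η ∧
        ∀ i, p.2.1 i ≠ 0}
      {p : Z × (ι → ℝ) × ℝ × ℝ | p.2.2.2 ^ 2 * u p.1 * p.2.2.1 ^ m = η ∧
        (∀ i, p.2.1 i ≠ 0) ∧ p.2.2.1 ≠ 0 ∧ ∏ i, (p.2.1 i) ^ (N i / m) = 1} := by
    rintro ⟨z, x, y⟩ ⟨h1, h2⟩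
    have ht0 : (∏ j, (x j) ^ (N j / m)) ≠ 0 :=
      Finset.prod_ne_zero_iff.mpr fun j _ => pow_ne_zero _ (h2 j)
    refine ⟨?_, fun i => mul_ne_zero (zpow_ne_zero _ ht0) (h2 i), ht0, ?_⟩
    · show y ^ 2 * u z * (∏ j, (x j) ^ (N j / m)) ^ m = η
      calc y ^ 2 * u z * (∏ j, (x j) ^ (N j / m)) ^ m
          = y ^ 2 * u z * ∏ j, ((x j) ^ (N j / m)) ^ m := by rw [Finset.prod_pow]
        _ = y ^ 2 * u z * ∏ j, (x j) ^ N j := by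
            rw [Finset.prod_congr rfl fun i _ => (hpowN (x i) i).symm]
        _ = η := h1
    · show ∏ i, ((∏ j, (x j) ^ (N j / m)) ^ (-(nn i)) * x i) ^ (N i / m) = 1
      rw [key_prod _ ht0 x _ _]
      have : ∑ i, -nn i * ((N i / m : ℕ) : ℤ) = -1 := by
        simp only [neg_mul]
        rw [Finset.sum_neg_distrib, hdiv]
      rw [this, zpow_neg, zpow_one, inv_mul_cancel₀ ht0]
  refine Set.InvOn.bijOn ⟨?_, ?_⟩ hmapsTo hmapsTo'
  · -- LeftInvOn g f
    rintro ⟨z, x, t, w⟩ ⟨h1, h2, h3, h4⟩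
    show g (z, fun i => t ^ nn i * x i, w) = (z, x, t, w)
    have htval : (∏ j, (t ^ nn j * x j) ^ (N j / m)) = t := by
      rw [key_prod t h3 x nn _, hdiv, zpow_one, h4, mul_one]
    simp only [hg, htval]
    refine Prod.ext rfl (Prod.ext ?_ rfl)
    funext i
    show t ^ (-(nn i)) * (t ^ nn i * x i) = x i
    rw [← mul_assoc, ← zpow_add₀ h3]
    simp
  · -- RightInvOn g f
    rintro ⟨z, x, y⟩ ⟨h1, h2⟩
    show (z, fun i => (∏ j, (x j) ^ (N j / m)) ^ nn i *
      ((∏ j, (x j) ^ (N j / m)) ^ (-(nn i)) * x i), y) = (z, x, y)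
    have ht0 : (∏ j, (x j) ^ (N j / m)) ≠ 0 :=
      Finset.prod_ne_zero_iff.mpr fun j _ => pow_ne_zero _ (h2 j)
    refine Prod.ext rfl (Prod.ext ?_ rfl)
    funext i
    show (∏ j, (x j) ^ (N j / m)) ^ nn i * ((∏ j, (x j) ^ (N j / m)) ^ (-(nn i)) * x i) = x i
    rw [← mul_assoc, ← zpow_add₀ ht0]
    simp
end

section
/- Let R and S be polynomials in n real variables. Let f = (f₁, …, fₙ) be an n-tuple of polynomials and g a polynomial, all in n+1 variables and all with real coefficients, such that f(x, −y) = f(x, y) and g(x, −y) = −g(x, y) for all (x, y) ∈ ℂⁿ × ℂ, and suppose the map φ = (f, g) restricts to a bijection from V⁺_ℂ = {(x,y) ∈ ℂⁿ × ℂ : y² = R(x)} onto W⁺_ℂ = {(x,y) ∈ ℂⁿ × ℂ : y² = S(x)}. Then the map (x, y) ↦ (f(x, −i·y), i·g(x, −i·y)) restricts to a bijection from the set of real points V⁻ = {(x,y) ∈ ℝⁿ × ℝ : y² = −R(x)} onto the set of real points W⁻ = {(x,y) ∈ ℝⁿ × ℝ : y² = −S(x)}. -/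
open MvPolynomial Complex

lemma conj_eval_aux {σ : Type*} (p : MvPolynomial σ ℂ) (hp : ∀ m, (p.coeff m).im = 0)
    (z : σ → ℂ) :
    (starRingEnd ℂ) (eval z p) = eval (fun v => (starRingEnd ℂ) (z v)) p := by
  have hmap : map (starRingEnd ℂ) p = p := by
    ext m
    rw [coeff_map]
    exact Complex.conj_eq_iff_im.2 (hp m)
  have h := eval₂_comp_left (starRingEnd ℂ) (RingHom.id ℂ) z p
  conv_rhs => rw [← hmap]
  rw [eval_map]
  rw [show (eval z) p = eval₂ (RingHom.id ℂ) z p from rfl] at *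
  rw [h]
  rfl

lemma conj_aeval_aux {n : ℕ} (R : MvPolynomial (Fin n) ℝ) (x : Fin n → ℂ) :
    (starRingEnd ℂ) (aeval x R) = aeval (fun i => (starRingEnd ℂ) (x i)) R := by
  rw [aeval_def, aeval_def]
  rw [eval₂_comp_left (starRingEnd ℂ) (algebraMap ℝ ℂ) x R]
  congr 1
  ext r
  simp [Complex.conj_ofReal]

lemma conj_eval_elim {n : ℕ} (p : MvPolynomial (Option (Fin n)) ℂ)
    (hp : ∀ m, (p.coeff m).im = 0) (x : Fin n → ℂ) (y : ℂ) :
    (starRingEnd ℂ) (eval (fun v => v.elim y x) p)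
      = eval (fun v => v.elim ((starRingEnd ℂ) y) (fun i => (starRingEnd ℂ) (x i))) p := by
  rw [conj_eval_aux p hp]
  have : (fun v => (starRingEnd ℂ) ((fun v : Option (Fin n) => v.elim y x) v))
      = fun v : Option (Fin n) => v.elim ((starRingEnd ℂ) y) (fun i => (starRingEnd ℂ) (x i)) := by
    funext v; cases v <;> rfl
  rw [this]

/-- If `φ = (f, g)` (with `f(x,−y) = f(x,y)`, `g(x,−y) = −g(x,y)`, all real coefficients)
restricts to a bijection from `V⁺_ℂ = {y² = R(x)}` onto `W⁺_ℂ = {y² = S(x)}`, then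
`(x,y) ↦ (f(x,−iy), i·g(x,−iy))` restricts to a bijection from the set of real points of
`{y² = −R(x)}` onto the set of real points of `{y² = −S(x)}`. Real points of `ℂⁿ × ℂ` are
the points all of whose coordinates have vanishing imaginary part; variables of the
polynomials `f i` and `g` are indexed by `Option (Fin n)`, with `none` corresponding
to `y`. -/
theorem stmt12 (n : ℕ) (R S : MvPolynomial (Fin n) ℝ)
    (f : Fin n → MvPolynomial (Option (Fin n)) ℂ)
    (g : MvPolynomial (Option (Fin n)) ℂ)
    (hfreal : ∀ i m, ((f i).coeff m).im = 0)
    (hgreal : ∀ m, (g.coeff m).im = 0)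
    (hfsym : ∀ (i : Fin n) (x : Fin n → ℂ) (y : ℂ),
      eval (fun v => v.elim (-y) x) (f i) = eval (fun v => v.elim y x) (f i))
    (hgantisym : ∀ (x : Fin n → ℂ) (y : ℂ),
      eval (fun v => v.elim (-y) x) g = - eval (fun v => v.elim y x) g)
    (hbij : Set.BijOn
      (fun p : (Fin n → ℂ) × ℂ =>
        ((fun i => eval (fun v => v.elim p.2 p.1) (f i)),
          eval (fun v => v.elim p.2 p.1) g))
      {p : (Fin n → ℂ) × ℂ | p.2 ^ 2 = aeval p.1 R}
      {p : (Fin n → ℂ) × ℂ | p.2 ^ 2 = aeval p.1 S}) :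
    Set.BijOn
      (fun p : (Fin n → ℂ) × ℂ =>
        ((fun i => eval (fun v => v.elim (-I * p.2) p.1) (f i)),
          I * eval (fun v => v.elim (-I * p.2) p.1) g))
      {p : (Fin n → ℂ) × ℂ | (∀ i, (p.1 i).im = 0) ∧ p.2.im = 0 ∧
        p.2 ^ 2 = -(aeval p.1 R)}
      {p : (Fin n → ℂ) × ℂ | (∀ i, (p.1 i).im = 0) ∧ p.2.im = 0 ∧
        p.2 ^ 2 = -(aeval p.1 S)} := by
  have hImem : ∀ (x : Fin n → ℂ) (y : ℂ), y ^ 2 = -(aeval x R) →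
      ((x, -I * y) : (Fin n → ℂ) × ℂ) ∈ {p : (Fin n → ℂ) × ℂ | p.2 ^ 2 = aeval p.1 R} := by
    intro x y hy
    simp only [Set.mem_setOf_eq]
    rw [mul_pow, hy]
    rw [show (-I) ^ 2 = -1 by rw [neg_pow]; simp [Complex.I_sq]]
    ring
  refine ⟨?_, ?_, ?_⟩
  · -- MapsTo
    rintro ⟨x, y⟩ ⟨hx, hy, heq⟩
    have hyc : (starRingEnd ℂ) y = y := Complex.conj_eq_iff_im.2 hy
    have hxc : ∀ i, (starRingEnd ℂ) (x i) = x i := fun i => Complex.conj_eq_iff_im.2 (hx i)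
    have hxfun : (fun i => (starRingEnd ℂ) (x i)) = x := funext hxc
    set w : ℂ := -I * y with hw
    have hmem := hbij.mapsTo (hImem x y heq)
    simp only [Set.mem_setOf_eq] at hmem
    have hcw : (starRingEnd ℂ) w = -w := by
      rw [hw, map_mul, hyc, map_neg, Complex.conj_I]; ring
    -- realness of f-values
    have hfre : ∀ i, ((eval (fun v => v.elim w x) (f i))).im = 0 := by
      intro i
      rw [← Complex.conj_eq_iff_im]
      rw [conj_eval_elim (f i) (hfreal i), hcw, hxfun]
      exact hfsym i x w
    have hgconj : (starRingEnd ℂ) (eval (fun v => v.elim w x) g)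
        = - eval (fun v => v.elim w x) g := by
      rw [conj_eval_elim g hgreal, hcw, hxfun]
      exact hgantisym x w
    refine ⟨hfre, ?_, ?_⟩
    · rw [← Complex.conj_eq_iff_im, map_mul, Complex.conj_I, hgconj]
      ring
    · show (I * eval (fun v => v.elim w x) g) ^ 2 = _
      rw [mul_pow, Complex.I_sq, hmem]
      ring
  · -- InjOn
    rintro ⟨x, y⟩ ⟨hx, hy, heq⟩ ⟨x', y'⟩ ⟨hx', hy', heq'⟩ h
    have h1 := congrArg Prod.fst h
    have h2 := congrArg Prod.snd h
    simp only at h1 h2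
    have h2' := mul_left_cancel₀ Complex.I_ne_zero h2
    have := hbij.injOn (hImem x y heq) (hImem x' y' heq')
      (by exact Prod.ext h1 h2')
    have e1 := congrArg Prod.fst this
    have e2 := congrArg Prod.snd this
    simp only at e1 e2
    have : y = y' := by
      have := mul_left_cancel₀ (neg_ne_zero.2 Complex.I_ne_zero) e2
      exact this
    exact Prod.ext e1 this
  · -- SurjOn
    rintro ⟨u, v⟩ ⟨hu, hv, hveq⟩
    have hvc : (starRingEnd ℂ) v = v := Complex.conj_eq_iff_im.2 hv
    have huc : ∀ i, (starRingEnd ℂ) (u i) = u i := fun i => Complex.conj_eq_iff_im.2 (hu i)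
    have hmemW : ((u, -I * v) : (Fin n → ℂ) × ℂ)
        ∈ {p : (Fin n → ℂ) × ℂ | p.2 ^ 2 = aeval p.1 S} := by
      simp only [Set.mem_setOf_eq]
      rw [mul_pow, hveq]
      rw [show (-I) ^ 2 = -1 by rw [neg_pow]; simp [Complex.I_sq]]
      ring
    obtain ⟨⟨x, y⟩, hxy, hφ⟩ := hbij.surjOn hmemW
    simp only [Set.mem_setOf_eq] at hxy
    have hφ1 := congrArg Prod.fst hφ
    have hφ2 := congrArg Prod.snd hφ
    simp only at hφ1 hφ2
    -- conjugate point and negated point both in V⁺ and have equal images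
    have hconj_mem : ((fun i => (starRingEnd ℂ) (x i), (starRingEnd ℂ) y) : (Fin n → ℂ) × ℂ)
        ∈ {p : (Fin n → ℂ) × ℂ | p.2 ^ 2 = aeval p.1 R} := by
      simp only [Set.mem_setOf_eq]
      rw [← map_pow, hxy, conj_aeval_aux]
    have hneg_mem : ((x, -y) : (Fin n → ℂ) × ℂ)
        ∈ {p : (Fin n → ℂ) × ℂ | p.2 ^ 2 = aeval p.1 R} := by
      simp only [Set.mem_setOf_eq]
      rw [show (-y) ^ 2 = y ^ 2 by ring]
      exact hxy
    have himg : ((fun i => (starRingEnd ℂ) (x i), (starRingEnd ℂ) y) : (Fin n → ℂ) × ℂ)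
        = (x, -y) := by
      apply hbij.injOn hconj_mem hneg_mem
      simp only
      refine Prod.ext ?_ ?_
      · funext i
        show eval (fun v => v.elim ((starRingEnd ℂ) y) (fun i => (starRingEnd ℂ) (x i))) (f i)
          = eval (fun v => v.elim (-y) x) (f i)
        rw [← conj_eval_elim (f i) (hfreal i), hfsym i x y]
        have h' : eval (fun v => v.elim y x) (f i) = u i := congrFun hφ1 i
        rw [h', huc i]
      · show eval (fun v => v.elim ((starRingEnd ℂ) y) (fun i => (starRingEnd ℂ) (x i))) g
          = eval (fun v => v.elim (-y) x) g
        rw [← conj_eval_elim g hgreal, hgantisym x y, hφ2]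
        rw [map_mul, map_neg, Complex.conj_I, hvc]
        ring
    have hxreal : ∀ i, (x i).im = 0 := by
      intro i
      rw [← Complex.conj_eq_iff_im]
      exact congrFun (congrArg Prod.fst himg) i
    have hyconj : (starRingEnd ℂ) y = -y := congrArg Prod.snd himg
    refine ⟨(x, I * y), ⟨hxreal, ?_, ?_⟩, ?_⟩
    · rw [← Complex.conj_eq_iff_im, map_mul, Complex.conj_I, hyconj]
      ring
    · show (I * y) ^ 2 = -(aeval x R)
      rw [mul_pow, Complex.I_sq, hxy]
      ring
    · show ((fun i => eval (fun v => v.elim (-I * (I * y)) x) (f i)),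
        I * eval (fun v => v.elim (-I * (I * y)) x) g) = (u, v)
      have harg : -I * (I * y) = y := by
        rw [← mul_assoc, neg_mul, Complex.I_mul_I]; ring
      rw [harg]
      refine Prod.ext ?_ ?_
      · exact hφ1
      · show I * eval (fun v => v.elim y x) g = v
        rw [hφ2, show I * (-I * v) = -(I * I) * v by ring, Complex.I_mul_I]
        ring
end

section
/- Let R and S be polynomials in n real variables. Let f = (f₁, …, fₙ) be an n-tuple of polynomials and g a polynomial, all in n+1 variables and all with real coefficients, such that f(x, −y) = f(x, y) and g(x, −y) = −g(x, y) for all (x, y) ∈ ℂⁿ × ℂ, and suppose the map φ = (f, g) restricts to a bijection from V⁺_ℂ = {(x,y) ∈ ℂⁿ × ℂ : y² = R(x)} onto W⁺_ℂ = {(x,y) ∈ ℂⁿ × ℂ : y² = S(x)}. Then the map x ↦ f(x, 0) restricts to a bijection from the real algebraic set {x ∈ ℝⁿ : R(x) = 0} onto the real algebraic set {x ∈ ℝⁿ : S(x) = 0}. -/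
open MvPolynomial Complex

lemma conj_eval_real_coeff {σ : Type*} (p : MvPolynomial σ ℂ)
    (hp : ∀ m, (p.coeff m).im = 0) (x : σ → ℂ) :
    starRingEnd ℂ (eval x p) = eval (fun i => starRingEnd ℂ (x i)) p := by
  have hmap : map (starRingEnd ℂ) p = p := by
    ext m
    rw [coeff_map]
    exact Complex.conj_eq_iff_im.2 (hp m)
  have h1 : eval x p = eval₂ (RingHom.id ℂ) x p := rfl
  rw [h1, eval₂_comp_left (starRingEnd ℂ) (RingHom.id ℂ) x p,
    eval₂_eq_eval_map]
  have h2 : (starRingEnd ℂ).comp (RingHom.id ℂ) = starRingEnd ℂ := by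
    ext z; rfl
  rw [h2, hmap]
  rfl

lemma conj_aeval_real {σ : Type*} (R : MvPolynomial σ ℝ) (x : σ → ℂ) :
    starRingEnd ℂ (aeval x R) = aeval (fun i => starRingEnd ℂ (x i)) R := by
  rw [aeval_def, aeval_def, eval₂_comp_left (starRingEnd ℂ) (algebraMap ℝ ℂ) x R]
  have h2 : (starRingEnd ℂ).comp (algebraMap ℝ ℂ) = algebraMap ℝ ℂ := by
    ext r; simp [Complex.conj_ofReal]
  rw [h2]
  rfl

/-- If `φ = (f, g)` (with `f(x,−y) = f(x,y)`, `g(x,−y) = −g(x,y)`, all real coefficients)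
restricts to a bijection from `V⁺_ℂ = {y² = R(x)}` onto `W⁺_ℂ = {y² = S(x)}`, then
`x ↦ f(x, 0)` restricts to a bijection from the set of real points of `{R = 0}` onto the
set of real points of `{S = 0}`. Real points of `ℂⁿ` are the points all of whose
coordinates have vanishing imaginary part; variables of the polynomials `f i` and `g`
are indexed by `Option (Fin n)`, with `none` corresponding to `y`. -/
theorem stmt13 (n : ℕ) (R S : MvPolynomial (Fin n) ℝ)
    (f : Fin n → MvPolynomial (Option (Fin n)) ℂ)
    (g : MvPolynomial (Option (Fin n)) ℂ)
    (hfreal : ∀ i m, ((f i).coeff m).im = 0)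
    (hgreal : ∀ m, (g.coeff m).im = 0)
    (hfsym : ∀ (i : Fin n) (x : Fin n → ℂ) (y : ℂ),
      eval (fun v => v.elim (-y) x) (f i) = eval (fun v => v.elim y x) (f i))
    (hgantisym : ∀ (x : Fin n → ℂ) (y : ℂ),
      eval (fun v => v.elim (-y) x) g = - eval (fun v => v.elim y x) g)
    (hbij : Set.BijOn
      (fun p : (Fin n → ℂ) × ℂ =>
        ((fun i => eval (fun v => v.elim p.2 p.1) (f i)),
          eval (fun v => v.elim p.2 p.1) g))
      {p : (Fin n → ℂ) × ℂ | p.2 ^ 2 = aeval p.1 R}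
      {p : (Fin n → ℂ) × ℂ | p.2 ^ 2 = aeval p.1 S}) :
    Set.BijOn
      (fun x : Fin n → ℂ => fun i => eval (fun v => v.elim 0 x) (f i))
      {x : Fin n → ℂ | (∀ i, (x i).im = 0) ∧ aeval x R = 0}
      {x : Fin n → ℂ | (∀ i, (x i).im = 0) ∧ aeval x S = 0} := by
  -- g(x,0) = 0
  have hg0 : ∀ x : Fin n → ℂ, eval (fun v => v.elim 0 x) g = 0 := by
    intro x
    have h := hgantisym x 0
    rw [neg_zero] at h
    linear_combination h / 2
  -- conjugation equivariance of evaluation at (x, y)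
  have key : ∀ (p : MvPolynomial (Option (Fin n)) ℂ), (∀ m, (p.coeff m).im = 0) →
      ∀ (x : Fin n → ℂ) (y : ℂ),
      eval (fun v : Option (Fin n) =>
          v.elim (starRingEnd ℂ y) (fun i => starRingEnd ℂ (x i))) p
        = starRingEnd ℂ (eval (fun v => v.elim y x) p) := by
    intro p hp x y
    rw [conj_eval_real_coeff p hp (fun v => v.elim y x)]
    exact congrArg (fun u => eval u p) (funext fun v : Option (Fin n) => by cases v <;> rfl)
  constructor
  · -- MapsTo
    rintro x ⟨hxre, hxR⟩
    have hmem : (x, (0 : ℂ)) ∈ {p : (Fin n → ℂ) × ℂ | p.2 ^ 2 = aeval p.1 R} := by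
      simp [Set.mem_setOf_eq, hxR]
    have h := hbij.mapsTo hmem
    simp only [Set.mem_setOf_eq] at h
    rw [hg0 x] at h
    refine ⟨fun i => ?_, by rw [← h]; ring⟩
    have hx : (fun i => starRingEnd ℂ (x i)) = x :=
      funext fun i => Complex.conj_eq_iff_im.2 (hxre i)
    have h0 : starRingEnd ℂ (0 : ℂ) = 0 := by simp
    have := key (f i) (hfreal i) x 0
    rw [hx, h0] at this
    exact Complex.conj_eq_iff_im.1 this.symm
  constructor
  · -- InjOn
    rintro x₁ ⟨hx₁re, hx₁R⟩ x₂ ⟨hx₂re, hx₂R⟩ h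
    have h1 : (x₁, (0 : ℂ)) ∈ {p : (Fin n → ℂ) × ℂ | p.2 ^ 2 = aeval p.1 R} := by
      simp [Set.mem_setOf_eq, hx₁R]
    have h2 : (x₂, (0 : ℂ)) ∈ {p : (Fin n → ℂ) × ℂ | p.2 ^ 2 = aeval p.1 R} := by
      simp [Set.mem_setOf_eq, hx₂R]
    have := hbij.injOn h1 h2 (by
      simp only [Prod.mk.injEq]
      exact ⟨h, by rw [hg0, hg0]⟩)
    exact congrArg Prod.fst this
  · -- SurjOn
    rintro x' ⟨hx're, hx'S⟩
    have hmem : (x', (0 : ℂ)) ∈ {p : (Fin n → ℂ) × ℂ | p.2 ^ 2 = aeval p.1 S} := by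
      simp [Set.mem_setOf_eq, hx'S]
    obtain ⟨⟨x, y⟩, hpV, hφ⟩ := hbij.surjOn hmem
    simp only [Set.mem_setOf_eq] at hpV
    rw [Prod.ext_iff] at hφ
    obtain ⟨hφf, hφg⟩ := hφ
    simp only at hφf hφg
    -- the conjugate point equals (x,y), hence (x,y) is real
    have hqV : ((fun i => starRingEnd ℂ (x i)), starRingEnd ℂ y)
        ∈ {p : (Fin n → ℂ) × ℂ | p.2 ^ 2 = aeval p.1 R} := by
      simp only [Set.mem_setOf_eq]
      rw [← map_pow, hpV, conj_aeval_real]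
    have hq_eq : ((fun i => starRingEnd ℂ (x i)), starRingEnd ℂ y) = (x, y) := by
      apply hbij.injOn hqV hpV
      simp only [Prod.mk.injEq]
      constructor
      · funext i
        have hfi : eval (fun v : Option (Fin n) => v.elim y x) (f i) = x' i := congrFun hφf i
        rw [key (f i) (hfreal i) x y, hfi, Complex.conj_eq_iff_im.2 (hx're i)]
      · rw [key g hgreal x y, hφg, map_zero]
    have hxre : ∀ i, (x i).im = 0 := fun i =>
      Complex.conj_eq_iff_im.1 (congrFun (congrArg Prod.fst hq_eq) i)
    -- the reflected point equals (x,y), hence y = 0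
    have hnegV : (x, -y) ∈ {p : (Fin n → ℂ) × ℂ | p.2 ^ 2 = aeval p.1 R} := by
      simp only [Set.mem_setOf_eq]
      rw [← hpV]; ring
    have hneg_eq : (x, -y) = (x, y) := by
      apply hbij.injOn hnegV hpV
      simp only [Prod.mk.injEq]
      constructor
      · funext i; exact hfsym i x y
      · rw [hgantisym x y, hφg, neg_zero]
    have hy0 : y = 0 := by
      have := congrArg Prod.snd hneg_eq
      simp only at this
      linear_combination -this / 2
    refine ⟨x, ⟨hxre, ?_⟩, ?_⟩
    · rw [← hpV, hy0]; ring
    · rw [hy0] at hφf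
      exact hφf
end
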